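/- With q = 2^d fixed (d ≥ 2), the ratio μ(n,d)/ν(n,d) tends to ∏_{j=1}^∞ 1/(1 − q^{1−2j}) as n → ∞; and for n fixed, μ(n,d)/ν(n,d) → 1 as d → ∞. -/

import Mathlib

open Filter Finset

/-- The upper bound `μ(n,d) = 2^{d·C(n,2)} - 1 - Σ_{r=1}^{n-2} C(n,r)(2^d-1)^{C(n-r,2)}`. -/
noncomputable def muBound (n d : ℕ) : ℝ :=
  2 ^ (d * (n * (n - 1) / 2)) - 1
    - ∑ r ∈ Finset.Icc 1 (n - 2),
        (n.choose r : ℝ) * ((2 : ℝ) ^ d - 1) ^ ((n - r) * (n - r - 1) / 2)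

/-- The lower bound `ν(n,d)` (with `q = 2^d`), with the even/odd cases. -/
noncomputable def nuBound (n d : ℕ) : ℝ :=
  if Even n then
    ((2 : ℝ) ^ d) ^ (n * (n - 1) / 2)
      * ∏ j ∈ Finset.Icc 1 (n / 2), (1 - ((2 : ℝ) ^ d) ^ ((1 : ℤ) - 2 * (j : ℤ)))
  else
    ((2 : ℝ) ^ (d * (n - 1)) - 2 ^ (n - 1))
      * ((2 : ℝ) ^ d) ^ ((n - 1) * (n - 2) / 2)
      * ∏ j ∈ Finset.Icc 1 ((n - 1) / 2), (1 - ((2 : ℝ) ^ d) ^ ((1 : ℤ) - 2 * (j : ℤ)))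

/- ### Auxiliary lemmas -/

private lemma half_split (m : ℕ) (hm : 2 ≤ m) :
    m * (m - 1) / 2 = (m - 1) * (m - 2) / 2 + (m - 1) := by
  obtain ⟨k, rfl⟩ : ∃ k, m = k + 2 := ⟨m - 2, by omega⟩
  have h : (k + 2) * (k + 2 - 1) = (k + 2 - 1) * (k + 2 - 2) + (k + 2 - 1) * 2 := by
    simp only [show k + 2 - 1 = k + 1 by omega, show k + 2 - 2 = k by omega]; ring
  rw [h, Nat.add_mul_div_right _ _ (by norm_num : 0 < 2)]

private lemma zpow_one_sub (q : ℝ) (_hq : 0 < q) (j : ℕ) (hj : 1 ≤ j) :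
    q ^ ((1 : ℤ) - 2 * (j : ℤ)) = (q ^ (2 * j - 1))⁻¹ := by
  have h : (1 : ℤ) - 2 * (j : ℤ) = -((2 * j - 1 : ℕ) : ℤ) := by omega
  rw [h, zpow_neg, zpow_natCast]

private lemma aux15_div_helper (μ A B C x : ℝ) (hx : x ≠ 0) :
    μ / (A * B * C) = μ / (B * x) * (x / A) * C⁻¹ := by
  have h : μ / (B * x) * (x / A) * C⁻¹ = μ * A⁻¹ * B⁻¹ * C⁻¹ * (x * x⁻¹) := by
    simp only [div_eq_mul_inv, mul_inv]; ring
  rw [h, mul_inv_cancel₀ hx, mul_one]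
  simp only [div_eq_mul_inv, mul_inv]; ring

private lemma aux15_div_helper2 (A B C x : ℝ) (hB : B ≠ 0) :
    A * B * C / (B * x) = A / x * C := by
  have h : A * B * C / (B * x) = A * x⁻¹ * C * (B * B⁻¹) := by
    simp only [div_eq_mul_inv, mul_inv]; ring
  rw [h, mul_inv_cancel₀ hB, mul_one]
  simp only [div_eq_mul_inv]

private lemma tendsto_inv_pow_pow (k : ℕ) (hk : 1 ≤ k) :
    Tendsto (fun e : ℕ => (((2 : ℝ) ^ e) ^ k)⁻¹) atTop (nhds 0) := by
  apply tendsto_inv_atTop_zero.comp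
  apply tendsto_atTop_mono (fun e => ?_)
    (tendsto_pow_atTop_atTop_of_one_lt (by norm_num : (1 : ℝ) < 2))
  calc (2 : ℝ) ^ e = ((2 : ℝ) ^ e) ^ 1 := (pow_one _).symm
    _ ≤ ((2 : ℝ) ^ e) ^ k := pow_le_pow_right₀ (one_le_pow₀ (by norm_num)) hk

private lemma x_bound {q : ℝ} (hq : 4 ≤ q) (j : ℕ) :
    (q ^ (2 * j + 1))⁻¹ ≤ (1 / 4) * (1 / 2) ^ j := by
  have hq0 : (0 : ℝ) < q := by linarith
  have h1 : (4 : ℝ) * 2 ^ j ≤ q ^ (2 * j + 1) := by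
    calc (4 : ℝ) * 2 ^ j ≤ 4 * 4 ^ j := by
          have := pow_le_pow_left₀ (by norm_num : (0:ℝ) ≤ 2) (by norm_num : (2:ℝ) ≤ 4) j
          nlinarith
      _ = 4 ^ (j + 1) := by rw [pow_succ]; ring
      _ ≤ q ^ (j + 1) := pow_le_pow_left₀ (by norm_num) hq _
      _ ≤ q ^ (2 * j + 1) := pow_le_pow_right₀ (by linarith) (by omega)
  have h2 : (0 : ℝ) < 4 * 2 ^ j := by positivity
  calc (q ^ (2 * j + 1))⁻¹ ≤ ((4 : ℝ) * 2 ^ j)⁻¹ := inv_anti₀ h2 h1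
    _ = (1 / 4) * (1 / 2) ^ j := by
        rw [mul_inv]; simp [one_div, inv_pow]

private lemma F_lb {q : ℝ} (hq : 4 ≤ q) (j : ℕ) :
    (3 / 4 : ℝ) ≤ 1 - (q ^ (2 * j + 1))⁻¹ := by
  have h := x_bound hq j
  have h2 : ((1 : ℝ) / 2) ^ j ≤ 1 := pow_le_one₀ (by norm_num) (by norm_num)
  nlinarith

private lemma aux15_multipliable {q : ℝ} (hq : 4 ≤ q) :
    Multipliable (fun j : ℕ => (1 - q ^ ((1 : ℤ) - 2 * ((j : ℤ) + 1)))⁻¹) := by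
  have hq0 : (0 : ℝ) < q := by linarith
  have hrw : ∀ j : ℕ, (1 : ℝ) - q ^ ((1 : ℤ) - 2 * ((j : ℤ) + 1)) = 1 - (q ^ (2 * j + 1))⁻¹ := by
    intro j
    have h1 : (1 : ℤ) - 2 * ((j : ℤ) + 1) = (1 : ℤ) - 2 * ((j + 1 : ℕ) : ℤ) := by push_cast; ring
    rw [h1, zpow_one_sub q hq0 (j + 1) (by omega), show 2 * (j + 1) - 1 = 2 * j + 1 from by omega]
  have key : Multipliable (fun j : ℕ => ((1 : ℝ) - (q ^ (2 * j + 1))⁻¹)⁻¹) := by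
    apply Real.multipliable_of_summable_log
      (fun j => by have := F_lb hq j; positivity)
    apply Summable.of_nonneg_of_le (f := fun j : ℕ => (4 / 3 : ℝ) * ((1 / 4) * (1 / 2) ^ j))
    · intro j
      apply Real.log_nonneg
      have h1 := F_lb hq j
      have h2 : (0 : ℝ) ≤ (q ^ (2 * j + 1))⁻¹ := by positivity
      rw [one_le_inv_iff₀]
      constructor
      · linarith
      · linarith
    · intro j
      have h1 := F_lb hq j
      have hx := x_bound hq j
      have hx0 : (0 : ℝ) ≤ (q ^ (2 * j + 1))⁻¹ := by positivity
      show Real.log ((1 - (q ^ (2 * j + 1))⁻¹)⁻¹) ≤ _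
      set F : ℝ := 1 - (q ^ (2 * j + 1))⁻¹ with hF
      clear_value F
      have hF0 : 0 < F := by linarith
      calc Real.log F⁻¹ ≤ F⁻¹ - 1 := Real.log_le_sub_one_of_pos (inv_pos.mpr hF0)
        _ = F⁻¹ * (1 - F) := by
            rw [mul_sub, mul_one, inv_mul_cancel₀ (ne_of_gt hF0)]
        _ ≤ (4 / 3) * ((1 / 4) * (1 / 2) ^ j) := by
            apply mul_le_mul
            · rw [show (4 / 3 : ℝ) = (3 / 4 : ℝ)⁻¹ by norm_num]
              exact inv_anti₀ (by norm_num) h1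
            · rw [hF]; simpa using hx
            · rw [hF]; simpa using hx0
            · norm_num
    · exact ((summable_geometric_of_lt_one (by norm_num) (by norm_num)).mul_left
        (1 / 4)).mul_left (4 / 3)
  exact key.congr (fun j => by rw [← hrw j])

private lemma aux15_tendsto_prod {q : ℝ} (hq : 4 ≤ q) :
    Tendsto (fun k : ℕ => ∏ j ∈ Icc 1 k, (1 - q ^ ((1 : ℤ) - 2 * (j : ℤ)))⁻¹) atTop
      (nhds (∏' j : ℕ, (1 - q ^ ((1 : ℤ) - 2 * ((j : ℤ) + 1)))⁻¹)) := by
  have h := (aux15_multipliable hq).hasProd.tendsto_prod_nat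
  have he : ∀ k : ℕ, ∏ j ∈ range k, (1 - q ^ ((1 : ℤ) - 2 * ((j : ℤ) + 1)))⁻¹
      = ∏ j ∈ Icc 1 k, (1 - q ^ ((1 : ℤ) - 2 * (j : ℤ)))⁻¹ := by
    intro k
    induction k with
    | zero => simp
    | succ k ih =>
        rw [Finset.prod_range_succ, ih, Finset.prod_Icc_succ_top (by omega)]
        norm_cast
  exact h.congr he

private lemma aux15_S_nonneg (m d : ℕ) :
    0 ≤ ∑ r ∈ Icc 1 (m - 2), (m.choose r : ℝ) * ((2 : ℝ) ^ d - 1) ^ ((m - r) * (m - r - 1) / 2) := by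
  apply Finset.sum_nonneg
  intro r _
  have h1 : (1 : ℝ) ≤ 2 ^ d := one_le_pow₀ one_le_two
  exact mul_nonneg (by positivity) (pow_nonneg (by linarith) _)

private lemma aux15_S_le (m d : ℕ) (hm : 2 ≤ m) :
    ∑ r ∈ Icc 1 (m - 2), (m.choose r : ℝ) * ((2 : ℝ) ^ d - 1) ^ ((m - r) * (m - r - 1) / 2)
      ≤ 2 ^ m * ((2 : ℝ) ^ d) ^ ((m - 1) * (m - 2) / 2) := by
  have hq1 : (1 : ℝ) ≤ 2 ^ d := one_le_pow₀ one_le_two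
  calc ∑ r ∈ Icc 1 (m - 2), (m.choose r : ℝ) * ((2 : ℝ) ^ d - 1) ^ ((m - r) * (m - r - 1) / 2)
      ≤ ∑ r ∈ Icc 1 (m - 2), (m.choose r : ℝ) * ((2 : ℝ) ^ d) ^ ((m - 1) * (m - 2) / 2) := by
        apply Finset.sum_le_sum
        intro r hr
        have hr1 : 1 ≤ r := (Finset.mem_Icc.mp hr).1
        apply mul_le_mul_of_nonneg_left _ (by positivity)
        calc ((2 : ℝ) ^ d - 1) ^ ((m - r) * (m - r - 1) / 2)
            ≤ ((2 : ℝ) ^ d) ^ ((m - r) * (m - r - 1) / 2) :=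
              pow_le_pow_left₀ (by linarith) (by linarith) _
          _ ≤ ((2 : ℝ) ^ d) ^ ((m - 1) * (m - 2) / 2) :=
              pow_le_pow_right₀ hq1
                (Nat.div_le_div_right (Nat.mul_le_mul (by omega) (by omega)))
    _ = (∑ r ∈ Icc 1 (m - 2), (m.choose r : ℝ)) * ((2 : ℝ) ^ d) ^ ((m - 1) * (m - 2) / 2) := by
        rw [Finset.sum_mul]
    _ ≤ 2 ^ m * ((2 : ℝ) ^ d) ^ ((m - 1) * (m - 2) / 2) := by
        apply mul_le_mul_of_nonneg_right _ (by positivity)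
        have hch : ∑ r ∈ Icc 1 (m - 2), m.choose r ≤ 2 ^ m := by
          calc ∑ r ∈ Icc 1 (m - 2), m.choose r ≤ ∑ r ∈ range (m + 1), m.choose r :=
                Finset.sum_le_sum_of_subset (fun r hr => by
                  simp only [Finset.mem_Icc, Finset.mem_range] at *; omega)
            _ = 2 ^ m := Nat.sum_range_choose m
        calc (∑ r ∈ Icc 1 (m - 2), (m.choose r : ℝ))
            = ((∑ r ∈ Icc 1 (m - 2), m.choose r : ℕ) : ℝ) := by push_cast; rfl
          _ ≤ ((2 ^ m : ℕ) : ℝ) := Nat.cast_le.mpr hch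
          _ = 2 ^ m := by push_cast; rfl

private lemma aux15_pow_eq (k : ℕ) :
    (2 : ℝ) ^ (k + 3) / 4 ^ (k + 1) = 8 * (1 / 2) ^ (k + 2) := by
  induction k with
  | zero => norm_num
  | succ k ih =>
      have h1 : (2 : ℝ) ^ (k + 1 + 3) = 2 ^ (k + 3) * 2 := by rw [pow_succ]
      have h2 : (4 : ℝ) ^ (k + 1 + 1) = 4 ^ (k + 1) * 4 := by rw [pow_succ]
      have h3 : ((1 : ℝ) / 2) ^ (k + 1 + 2) = (1 / 2) ^ (k + 2) * (1 / 2) := by rw [pow_succ]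
      rw [h1, h2, h3, mul_div_mul_comm, ih]
      ring

private lemma aux15_mu_tendsto (d : ℕ) (hd : 2 ≤ d) :
    Tendsto (fun m : ℕ => muBound m d / ((2 : ℝ) ^ d) ^ (m * (m - 1) / 2)) atTop (nhds 1) := by
  have hq : (4 : ℝ) ≤ 2 ^ d := by
    calc (4 : ℝ) = 2 ^ 2 := by norm_num
      _ ≤ 2 ^ d := pow_le_pow_right₀ one_le_two hd
  apply tendsto_of_tendsto_of_tendsto_of_le_of_le'
    (g := fun m : ℕ => 1 - 8 * (1 / 2 : ℝ) ^ m) (h := fun _ => (1 : ℝ))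
  · have h0 : Tendsto (fun m : ℕ => ((1 : ℝ) / 2) ^ m) atTop (nhds 0) :=
      tendsto_pow_atTop_nhds_zero_of_lt_one (by norm_num) (by norm_num)
    have := (h0.const_mul (8 : ℝ)).const_sub 1
    simpa using this
  · exact tendsto_const_nhds
  · filter_upwards [eventually_ge_atTop 2] with m hm
    have hS0 := aux15_S_nonneg m d
    have hSle := aux15_S_le m d hm
    have hqE : (1 : ℝ) ≤ ((2 : ℝ) ^ d) ^ ((m - 1) * (m - 2) / 2) := one_le_pow₀ (by linarith)
    have hNpos : (0 : ℝ) < ((2 : ℝ) ^ d) ^ (m * (m - 1) / 2) := by positivity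
    have hNsplit : ((2 : ℝ) ^ d) ^ (m * (m - 1) / 2)
        = ((2 : ℝ) ^ d) ^ ((m - 1) * (m - 2) / 2) * ((2 : ℝ) ^ d) ^ (m - 1) := by
      rw [half_split m hm, pow_add]
    set S := ∑ r ∈ Icc 1 (m - 2), (m.choose r : ℝ) * ((2 : ℝ) ^ d - 1) ^ ((m - r) * (m - r - 1) / 2)
    set E := ((2 : ℝ) ^ d) ^ ((m - 1) * (m - 2) / 2)
    have hmu : muBound m d = ((2 : ℝ) ^ d) ^ (m * (m - 1) / 2) - 1 - S := by
      rw [muBound, pow_mul]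
    have key : (1 + S) / ((2 : ℝ) ^ d) ^ (m * (m - 1) / 2) ≤ 8 * (1 / 2 : ℝ) ^ m := by
      have h1 : 1 + S ≤ 2 ^ (m + 1) * E := by
        have h2 : (1 : ℝ) ≤ 2 ^ m := one_le_pow₀ one_le_two
        have h3 : (2 : ℝ) ^ (m + 1) = 2 * 2 ^ m := by rw [pow_succ]; ring
        nlinarith
      calc (1 + S) / ((2 : ℝ) ^ d) ^ (m * (m - 1) / 2)
          ≤ (2 ^ (m + 1) * E) / ((2 : ℝ) ^ d) ^ (m * (m - 1) / 2) := by gcongr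
        _ = 2 ^ (m + 1) / ((2 : ℝ) ^ d) ^ (m - 1) := by
            rw [hNsplit, mul_comm ((2 : ℝ) ^ (m + 1)) E, mul_div_mul_left _ _ (by positivity)]
        _ ≤ 2 ^ (m + 1) / (4 : ℝ) ^ (m - 1) := by
            gcongr
        _ = 8 * (1 / 2 : ℝ) ^ m := by
            obtain ⟨k, rfl⟩ : ∃ k, m = k + 2 := ⟨m - 2, by omega⟩
            have e1 : k + 2 + 1 = k + 3 := by omega
            have e2 : k + 2 - 1 = k + 1 := by omega
            rw [e1, e2]
            exact aux15_pow_eq k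
    have heq : muBound m d / ((2 : ℝ) ^ d) ^ (m * (m - 1) / 2)
        = 1 - (1 + S) / ((2 : ℝ) ^ d) ^ (m * (m - 1) / 2) := by
      rw [hmu]
      field_simp
      ring
    linarith [heq, key]
  · filter_upwards [eventually_ge_atTop 2] with m hm
    have hS0 := aux15_S_nonneg m d
    have hNpos : (0 : ℝ) < ((2 : ℝ) ^ d) ^ (m * (m - 1) / 2) := by positivity
    rw [div_le_one hNpos, muBound, pow_mul]
    set S := ∑ r ∈ Icc 1 (m - 2), (m.choose r : ℝ) * ((2 : ℝ) ^ d - 1) ^ ((m - r) * (m - r - 1) / 2)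
    linarith

private lemma aux15_c_tendsto (d : ℕ) (hd : 2 ≤ d) :
    Tendsto (fun m : ℕ => if Even m then (1 : ℝ)
      else ((2 : ℝ) ^ d) ^ (m - 1) / (((2 : ℝ) ^ d) ^ (m - 1) - 2 ^ (m - 1))) atTop (nhds 1) := by
  have hq : (4 : ℝ) ≤ 2 ^ d := by
    calc (4 : ℝ) = 2 ^ 2 := by norm_num
      _ ≤ 2 ^ d := pow_le_pow_right₀ one_le_two hd
  apply tendsto_of_tendsto_of_tendsto_of_le_of_le'
    (g := fun _ : ℕ => (1 : ℝ)) (h := fun m : ℕ => 1 + 2 * (1 / 2 : ℝ) ^ (m - 1))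
    tendsto_const_nhds
  · have h0 : Tendsto (fun m : ℕ => ((1 : ℝ) / 2) ^ (m - 1)) atTop (nhds 0) := by
      have h1 : Tendsto (fun m : ℕ => m - 1) atTop atTop :=
        tendsto_atTop_atTop.mpr (fun b => ⟨b + 1, fun a ha => by omega⟩)
      exact (tendsto_pow_atTop_nhds_zero_of_lt_one (by norm_num) (by norm_num)).comp h1
    simpa using (h0.const_mul (2 : ℝ)).const_add 1
  · filter_upwards [eventually_ge_atTop 2] with m hm
    by_cases h : Even m
    · simp [h]
    · simp only [h, if_false]
      have hlt : (2 : ℝ) ^ (m - 1) < ((2 : ℝ) ^ d) ^ (m - 1) :=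
        pow_lt_pow_left₀ (by linarith) (by norm_num) (by omega)
      rw [le_div_iff₀ (by linarith)]
      have hpos : (0 : ℝ) ≤ 2 ^ (m - 1) := by positivity
      linarith
  · filter_upwards [eventually_ge_atTop 2] with m hm
    by_cases h : Even m
    · simp only [h, if_true]
      have : (0 : ℝ) ≤ (1 / 2 : ℝ) ^ (m - 1) := by positivity
      linarith
    · simp only [h, if_false]
      have h44 : ((4 : ℝ)) ^ (m - 1) ≤ ((2 : ℝ) ^ d) ^ (m - 1) :=
        pow_le_pow_left₀ (by norm_num) hq _
      have h4e : ((4 : ℝ)) ^ (m - 1) = 2 ^ (m - 1) * 2 ^ (m - 1) := by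
        rw [show (4 : ℝ) = 2 * 2 by norm_num, mul_pow]
      have h2 : (2 : ℝ) ≤ 2 ^ (m - 1) :=
        le_self_pow₀ one_le_two (by omega)
      have hlt : (2 : ℝ) ^ (m - 1) < ((2 : ℝ) ^ d) ^ (m - 1) :=
        pow_lt_pow_left₀ (by linarith) (by norm_num) (by omega)
      rw [div_le_iff₀ (by linarith)]
      have h3 : ((1 : ℝ) / 2) ^ (m - 1) = ((2 : ℝ) ^ (m - 1))⁻¹ := by
        rw [one_div, inv_pow]
      have h6 : (2 : ℝ) ^ (m - 1) ≤ ((2 : ℝ) ^ d) ^ (m - 1) * ((2 : ℝ) ^ (m - 1))⁻¹ := by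
        rw [← div_eq_mul_inv, le_div_iff₀ (by positivity)]
        calc (2 : ℝ) ^ (m - 1) * 2 ^ (m - 1) = 4 ^ (m - 1) := h4e.symm
          _ ≤ ((2 : ℝ) ^ d) ^ (m - 1) := h44
      have hta : (2 : ℝ) ^ (m - 1) * ((2 : ℝ) ^ (m - 1))⁻¹ = 1 :=
        mul_inv_cancel₀ (by positivity)
      rw [h3]
      nlinarith [h6, hta, h2]

/-- With `q = 2^d` fixed (`d ≥ 2`), `μ(n,d)/ν(n,d) → ∏_{j=1}^∞ 1/(1-q^{1-2j})`
as `n → ∞`; and for `n` fixed (`n ≥ 2`), `μ(n,d)/ν(n,d) → 1` as `d → ∞`. -/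
theorem stmt15 (d : ℕ) (hd : 2 ≤ d) (n : ℕ) (hn : 2 ≤ n) :
    Filter.Tendsto (fun m : ℕ => muBound m d / nuBound m d) Filter.atTop
      (nhds (∏' j : ℕ, (1 - ((2 : ℝ) ^ d) ^ ((1 : ℤ) - 2 * ((j : ℤ) + 1)))⁻¹)) ∧
    Filter.Tendsto (fun e : ℕ => muBound n e / nuBound n e) Filter.atTop (nhds 1) := by
  constructor
  · -- Part 1 : n → ∞, d fixed
    have hq : (4 : ℝ) ≤ 2 ^ d := by
      calc (4 : ℝ) = 2 ^ 2 := by norm_num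
        _ ≤ 2 ^ d := pow_le_pow_right₀ one_le_two hd
    have hdiv : Tendsto (fun m : ℕ => m / 2) atTop atTop :=
      tendsto_atTop_atTop.mpr (fun b => ⟨2 * b, fun a ha => by omega⟩)
    have hprod := (aux15_tendsto_prod hq).comp hdiv
    have hcomb := ((aux15_mu_tendsto d hd).mul (aux15_c_tendsto d hd)).mul hprod
    simp only [one_mul] at hcomb
    apply hcomb.congr'
    filter_upwards [eventually_ge_atTop 2] with m hm
    simp only [Function.comp]
    by_cases h : Even m
    · rw [if_pos h, mul_one, nuBound, if_pos h, Finset.prod_inv_distrib,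
        ← div_eq_mul_inv, div_div]
    · have hm2 : m / 2 = (m - 1) / 2 := by
        have := Nat.not_even_iff.mp h
        omega
      rw [if_neg h, nuBound, if_neg h, hm2, Finset.prod_inv_distrib, pow_mul,
        aux15_div_helper (muBound m d) _ _ _ (((2 : ℝ) ^ d) ^ (m - 1)) (by positivity),
        show ((2 : ℝ) ^ d) ^ ((m - 1) * (m - 2) / 2) * ((2 : ℝ) ^ d) ^ (m - 1)
            = ((2 : ℝ) ^ d) ^ (m * (m - 1) / 2) from by rw [half_split m hm, pow_add]]
  · -- Part 2 : d → ∞, n fixed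
    have hN1 : 1 ≤ n * (n - 1) / 2 := by
      have h2 : 2 * 1 ≤ n * (n - 1) := Nat.mul_le_mul hn (by omega)
      omega
    have hinv : Tendsto (fun e : ℕ => (((2 : ℝ) ^ e) ^ (n * (n - 1) / 2))⁻¹) atTop (nhds 0) :=
      tendsto_inv_pow_pow _ hN1
    have hbase : Tendsto (fun e : ℕ => ((2 : ℝ) ^ e)⁻¹) atTop (nhds 0) :=
      tendsto_inv_atTop_zero.comp (tendsto_pow_atTop_atTop_of_one_lt (by norm_num))
    -- the sum part of μ tends to 0
    have hsum : Tendsto (fun e : ℕ => ∑ r ∈ Icc 1 (n - 2),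
        ((n.choose r : ℝ) * ((2 : ℝ) ^ e - 1) ^ ((n - r) * (n - r - 1) / 2)
          / ((2 : ℝ) ^ e) ^ (n * (n - 1) / 2))) atTop (nhds 0) := by
      have hterm : ∀ r ∈ Icc 1 (n - 2), Tendsto (fun e : ℕ =>
          (n.choose r : ℝ) * ((2 : ℝ) ^ e - 1) ^ ((n - r) * (n - r - 1) / 2)
            / ((2 : ℝ) ^ e) ^ (n * (n - 1) / 2)) atTop (nhds 0) := by
        intro r hr
        obtain ⟨hr1, hr2⟩ := Finset.mem_Icc.mp hr
        have ha : (n - r) * (n - r - 1) / 2 + 1 ≤ n * (n - 1) / 2 := by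
          have h1 : (n - r) * (n - r - 1) / 2 ≤ (n - 1) * (n - 2) / 2 :=
            Nat.div_le_div_right (Nat.mul_le_mul (by omega) (by omega))
          have h2 := half_split n hn
          omega
        set a := (n - r) * (n - r - 1) / 2
        set N := n * (n - 1) / 2
        apply tendsto_of_tendsto_of_tendsto_of_le_of_le'
          (g := fun _ : ℕ => (0 : ℝ)) (h := fun e : ℕ => (n.choose r : ℝ) * ((2 : ℝ) ^ e)⁻¹)
          tendsto_const_nhds
        · simpa using hbase.const_mul ((n.choose r : ℝ))
        · filter_upwards with e
          have hQ1 : (1 : ℝ) ≤ 2 ^ e := one_le_pow₀ one_le_two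
          have hQ0 : (0 : ℝ) ≤ 2 ^ e - 1 := by linarith
          positivity
        · filter_upwards with e
          have hQ1 : (1 : ℝ) ≤ 2 ^ e := one_le_pow₀ one_le_two
          have hsplit : ((2 : ℝ) ^ e) ^ N = ((2 : ℝ) ^ e) ^ a * ((2 : ℝ) ^ e) ^ (N - a) := by
            rw [← pow_add]
            congr 1
            omega
          calc (n.choose r : ℝ) * ((2 : ℝ) ^ e - 1) ^ a / ((2 : ℝ) ^ e) ^ N
              ≤ (n.choose r : ℝ) * ((2 : ℝ) ^ e) ^ a / ((2 : ℝ) ^ e) ^ N := by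
                gcongr
                · linarith
            _ = (n.choose r : ℝ) * (((2 : ℝ) ^ e) ^ a / ((2 : ℝ) ^ e) ^ N) := by
                rw [mul_div_assoc]
            _ ≤ (n.choose r : ℝ) * ((2 : ℝ) ^ e)⁻¹ := by
                apply mul_le_mul_of_nonneg_left _ (by positivity)
                rw [hsplit, div_mul_cancel_left₀ (by positivity)]
                apply inv_anti₀ (by positivity)
                exact le_self_pow₀ hQ1 (by omega)
      have := tendsto_finset_sum (Icc 1 (n - 2)) hterm
      simpa using this
    have k1 : Tendsto (fun e : ℕ => muBound n e / ((2 : ℝ) ^ e) ^ (n * (n - 1) / 2))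
        atTop (nhds 1) := by
      have heq : ∀ e : ℕ, muBound n e / ((2 : ℝ) ^ e) ^ (n * (n - 1) / 2)
          = 1 - (((2 : ℝ) ^ e) ^ (n * (n - 1) / 2))⁻¹ - ∑ r ∈ Icc 1 (n - 2),
            ((n.choose r : ℝ) * ((2 : ℝ) ^ e - 1) ^ ((n - r) * (n - r - 1) / 2)
              / ((2 : ℝ) ^ e) ^ (n * (n - 1) / 2)) := by
        intro e
        rw [muBound, pow_mul, sub_div, sub_div, div_self (by positivity), ← Finset.sum_div,
          one_div]
      rw [funext heq]
      have := (tendsto_const_nhds (x := (1 : ℝ)) (f := atTop (α := ℕ))).sub hinv |>.sub hsum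
      simpa using this
    have k2 : Tendsto (fun e : ℕ => nuBound n e / ((2 : ℝ) ^ e) ^ (n * (n - 1) / 2))
        atTop (nhds 1) := by
      have hfac : ∀ (s : Finset ℕ), (∀ j ∈ s, 1 ≤ j) → Tendsto (fun e : ℕ =>
          ∏ j ∈ s, (1 - ((2 : ℝ) ^ e) ^ ((1 : ℤ) - 2 * (j : ℤ)))) atTop (nhds 1) := by
        intro s hs
        have h := tendsto_finset_prod (f := fun (j : ℕ) (e : ℕ) =>
            1 - ((2 : ℝ) ^ e) ^ ((1 : ℤ) - 2 * (j : ℤ))) (x := atTop)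
            (a := fun _ => (1 : ℝ)) s ?_
        · simpa using h
        · intro j hj
          have hj1 := hs j hj
          have hz : ∀ e : ℕ, ((2 : ℝ) ^ e) ^ ((1 : ℤ) - 2 * (j : ℤ))
              = (((2 : ℝ) ^ e) ^ (2 * j - 1))⁻¹ := fun e =>
            zpow_one_sub _ (by positivity) j hj1
          simp only [hz]
          have h0 := tendsto_inv_pow_pow (2 * j - 1) (by omega)
          simpa using (tendsto_const_nhds (x := (1 : ℝ))).sub h0
      by_cases hpar : Even n
      · have heq2 : ∀ e : ℕ, nuBound n e / ((2 : ℝ) ^ e) ^ (n * (n - 1) / 2)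
            = ∏ j ∈ Icc 1 (n / 2), (1 - ((2 : ℝ) ^ e) ^ ((1 : ℤ) - 2 * (j : ℤ))) := by
          intro e
          rw [nuBound, if_pos hpar, mul_comm, mul_div_assoc, div_self (by positivity), mul_one]
        rw [funext heq2]
        exact hfac (Icc 1 (n / 2)) (fun j hj => (Finset.mem_Icc.mp hj).1)
      · have heq2 : ∀ e : ℕ, nuBound n e / ((2 : ℝ) ^ e) ^ (n * (n - 1) / 2)
            = (1 - 2 ^ (n - 1) * (((2 : ℝ) ^ e) ^ (n - 1))⁻¹)
              * ∏ j ∈ Icc 1 ((n - 1) / 2), (1 - ((2 : ℝ) ^ e) ^ ((1 : ℤ) - 2 * (j : ℤ))) := by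
          intro e
          rw [nuBound, if_neg hpar, pow_mul,
            show ((2 : ℝ) ^ e) ^ (n * (n - 1) / 2)
                = ((2 : ℝ) ^ e) ^ ((n - 1) * (n - 2) / 2) * ((2 : ℝ) ^ e) ^ (n - 1) from by
              rw [half_split n hn, pow_add],
            aux15_div_helper2 _ _ _ _ (by positivity),
            sub_div, div_self (by positivity), div_eq_mul_inv]
        rw [funext heq2]
        have h1 : Tendsto (fun e : ℕ => 1 - (2 : ℝ) ^ (n - 1) * (((2 : ℝ) ^ e) ^ (n - 1))⁻¹)
            atTop (nhds 1) := by
          have := (tendsto_inv_pow_pow (n - 1) (by omega)).const_mul ((2 : ℝ) ^ (n - 1))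
          simpa using (tendsto_const_nhds (x := (1 : ℝ))).sub this
        have := h1.mul (hfac (Icc 1 ((n - 1) / 2)) (fun j hj => (Finset.mem_Icc.mp hj).1))
        simpa using this
    have hfin : ∀ e : ℕ, muBound n e / nuBound n e
        = (muBound n e / ((2 : ℝ) ^ e) ^ (n * (n - 1) / 2))
          / (nuBound n e / ((2 : ℝ) ^ e) ^ (n * (n - 1) / 2)) := by
      intro e
      rw [div_div_div_cancel_right₀]
      positivity
    rw [funext hfin]
    have hlim := k1.div k2 one_ne_zero
    rw [div_one] at hlim
    exact hlim
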